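/- Let G ≤ Aut T be a self-similar group containing a rooted automorphism a whose label at the root is a d-cycle. If for each n ∈ ℕ there exists a vertex u_n ∈ L_n such that ψ_{u_n}(st_G(L_n)) = G, then G is super strongly fractal. -/

import Mathlib

open Equiv

namespace TreeFract

variable {X : Type*}

/-- The automorphism group of the rooted `d`-adic tree with vertex set the free
monoid `List X`: permutations of the vertex set fixing the root and sending
children of a vertex to children of its image (this is exactly incidence
preservation for the rooted tree). -/
def AutT (X : Type*) : Subgroup (Equiv.Perm (List X)) where
  carrier := {g | g [] = [] ∧ ∀ (u : List X) (x : X), ∃ y : X, g (u ++ [x]) = g u ++ [y]}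
  one_mem' := ⟨rfl, fun _ x => ⟨x, rfl⟩⟩
  mul_mem' := by
    rintro f g ⟨hf1, hf2⟩ ⟨hg1, hg2⟩
    refine ⟨?_, fun u x => ?_⟩
    · show f (g []) = []
      rw [hg1, hf1]
    · obtain ⟨y, hy⟩ := hg2 u x
      obtain ⟨z, hz⟩ := hf2 (g u) y
      exact ⟨z, by show f (g (u ++ [x])) = f (g u) ++ [z]; rw [hy, hz]⟩
  inv_mem' := by
    rintro g ⟨hg1, hg2⟩
    have hinj := g.injective
    refine ⟨?_, fun u x => ?_⟩
    · apply hinj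
      show g (g⁻¹ []) = g []
      rw [Equiv.Perm.coe_inv, Equiv.apply_symm_apply, hg1]
    · have hne : g⁻¹ (u ++ [x]) ≠ [] := by
        intro h
        have h2 : u ++ [x] = g [] := by
          conv_lhs => rw [← Equiv.apply_symm_apply g (u ++ [x]), ← Equiv.Perm.coe_inv, h]
        rw [hg1] at h2
        simp at h2
      obtain ⟨y, hy⟩ : ∃ y, g⁻¹ (u ++ [x]) = (g⁻¹ (u ++ [x])).dropLast ++ [y] :=
        ⟨(g⁻¹ (u ++ [x])).getLast hne, (List.dropLast_append_getLast hne).symm⟩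
      obtain ⟨z, hz⟩ := hg2 ((g⁻¹ (u ++ [x])).dropLast) y
      have happ : g ((g⁻¹ (u ++ [x])).dropLast) ++ [z] = u ++ [x] := by
        rw [← hz, ← hy, Equiv.Perm.coe_inv, Equiv.apply_symm_apply]
      have h2 : g ((g⁻¹ (u ++ [x])).dropLast) = u ∧ ([z] : List X) = [x] :=
        List.append_inj' happ rfl
      refine ⟨y, ?_⟩
      rw [hy]
      congr 1
      apply hinj
      rw [Equiv.Perm.coe_inv, Equiv.apply_symm_apply, ← Equiv.Perm.coe_inv, h2.1]

/-- The underlying function of the section of `g` at the vertex `u`. -/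
def sectFun (g : Equiv.Perm (List X)) (u : List X) : List X → List X :=
  fun v => (g (u ++ v)).drop (g u).length

open scoped Classical in
/-- The section `g_u` of a tree automorphism `g` at a vertex `u`, i.e. the unique
automorphism with `g (u ++ v) = g u ++ g_u v` for all `v`.  (By convention it is
the identity for permutations which are not tree automorphisms.) -/
noncomputable def sect (g : Equiv.Perm (List X)) (u : List X) : Equiv.Perm (List X) :=
  if h : Function.Bijective (sectFun g u) then Equiv.ofBijective _ h else 1

/-- The underlying function of the label of `g` at the vertex `u`. -/
def labelFun (g : Equiv.Perm (List X)) (u : List X) : X → X :=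
  fun x => (g (u ++ [x])).getLastD x

open scoped Classical in
/-- The label `g_(u)` of a tree automorphism `g` at a vertex `u`: the permutation
of `X` with `g (u ++ [x]) = g u ++ [g_(u) x]`.  (By convention it is the identity
for permutations which are not tree automorphisms.) -/
noncomputable def label (g : Equiv.Perm (List X)) (u : List X) : Equiv.Perm X :=
  if h : Function.Bijective (labelFun g u) then Equiv.ofBijective _ h else 1

/-- The stabilizer `st_G(u)` of the vertex `u` in `G`. -/
def stV (G : Subgroup (Equiv.Perm (List X))) (u : List X) : Subgroup (Equiv.Perm (List X)) where
  carrier := {g | g ∈ G ∧ g u = u}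
  one_mem' := ⟨one_mem G, rfl⟩
  mul_mem' := by
    rintro f g ⟨hf, hf2⟩ ⟨hg, hg2⟩
    exact ⟨mul_mem hf hg, by show f (g u) = u; rw [hg2, hf2]⟩
  inv_mem' := by
    rintro g ⟨hg, hg2⟩
    refine ⟨inv_mem hg, ?_⟩
    apply g.injective
    show g (g⁻¹ u) = g u
    rw [Equiv.Perm.coe_inv, Equiv.apply_symm_apply, hg2]

/-- The stabilizer `st_G(L_n)` of the `n`-th level in `G`. -/
def stL (G : Subgroup (Equiv.Perm (List X))) (n : ℕ) : Subgroup (Equiv.Perm (List X)) where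
  carrier := {g | g ∈ G ∧ ∀ u : List X, u.length = n → g u = u}
  one_mem' := ⟨one_mem G, fun _ _ => rfl⟩
  mul_mem' := by
    rintro f g ⟨hf, hf2⟩ ⟨hg, hg2⟩
    exact ⟨mul_mem hf hg, fun u hu => by show f (g u) = u; rw [hg2 u hu, hf2 u hu]⟩
  inv_mem' := by
    rintro g ⟨hg, hg2⟩
    refine ⟨inv_mem hg, fun u hu => ?_⟩
    apply g.injective
    show g (g⁻¹ u) = g u
    rw [Equiv.Perm.coe_inv, Equiv.apply_symm_apply, hg2 u hu]

/-- `G` is self-similar: sections of elements of `G` lie in `G`. -/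
def SelfSimilar (G : Subgroup (Equiv.Perm (List X))) : Prop :=
  ∀ g ∈ G, ∀ u : List X, sect g u ∈ G

/-- `G` acts transitively on the first level of the tree. -/
def FirstLevelTransitive (G : Subgroup (Equiv.Perm (List X))) : Prop :=
  ∀ x y : X, ∃ g ∈ G, g [x] = [y]

/-- `G` is level transitive: it acts transitively on every level of the tree. -/
def LevelTransitive (G : Subgroup (Equiv.Perm (List X))) : Prop :=
  ∀ (n : ℕ) (u v : List X), u.length = n → v.length = n → ∃ g ∈ G, g u = v

/-- `G` is fractal: `ψ_u(st_G(u)) = G` for every vertex `u`. -/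
def Fractal (G : Subgroup (Equiv.Perm (List X))) : Prop :=
  ∀ u : List X,
    (fun g => sect g u) '' (stV G u : Set (Equiv.Perm (List X))) = (G : Set (Equiv.Perm (List X)))

/-- `G` is strongly fractal: `ψ_x(st_G(L_1)) = G` for every first-level vertex `x`. -/
def StronglyFractal (G : Subgroup (Equiv.Perm (List X))) : Prop :=
  ∀ x : X,
    (fun g => sect g [x]) '' (stL G 1 : Set (Equiv.Perm (List X))) = (G : Set (Equiv.Perm (List X)))

/-- `G` is super strongly fractal: `ψ_u(st_G(L_n)) = G` for every `n` and every `u ∈ L_n`. -/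
def SuperStronglyFractal (G : Subgroup (Equiv.Perm (List X))) : Prop :=
  ∀ (n : ℕ) (u : List X), u.length = n →
    (fun g => sect g u) '' (stL G n : Set (Equiv.Perm (List X))) = (G : Set (Equiv.Perm (List X)))

/-- The normal closure `⟨S⟩^G` of a subset `S ⊆ G` in the subgroup `G`, realized as a
subgroup of the ambient group: the subgroup generated by all `G`-conjugates of `S`. -/
def normalClosureIn (G : Subgroup (Equiv.Perm (List X))) (S : Set (Equiv.Perm (List X))) :
    Subgroup (Equiv.Perm (List X)) :=
  Subgroup.closure {t | ∃ g ∈ G, ∃ s ∈ S, t = g * s * g⁻¹}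

end TreeFract
namespace TreeFract

/-! ### The Hanoi towers generators -/

section Hanoi

variable {d : ℕ}

/-- The underlying function of the automorphism `a_{ij}` of the Hanoi Towers group:
it swaps the first occurrence of `i` or `j` in a word. -/
def hanoiFun (i j : Fin d) : List (Fin d) → List (Fin d)
  | [] => []
  | x :: w => if x = i then j :: w else if x = j then i :: w else x :: hanoiFun i j w

lemma hanoiFun_invol (i j : Fin d) : ∀ w, hanoiFun i j (hanoiFun i j w) = w
  | [] => rfl
  | x :: w => by
    by_cases h1 : x = i
    · subst h1
      by_cases h2 : j = x
      · simp [hanoiFun, h2]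
      · simp [hanoiFun, h2]
    · by_cases h2 : x = j
      · subst h2
        simp [hanoiFun, h1]
      · simp [hanoiFun, h1, h2, hanoiFun_invol i j w]

/-- The automorphism `a_{ij}` of the `d`-adic tree: its label at the root is the
transposition `(x_i x_j)`, its sections at the first-level vertices `x_i` and `x_j`
are trivial and all its other first-level sections equal `a_{ij}` again. -/
def hanoiA (i j : Fin d) : Equiv.Perm (List (Fin d)) :=
  ⟨hanoiFun i j, hanoiFun i j, hanoiFun_invol i j, hanoiFun_invol i j⟩

end Hanoi

/-- The generator `b_i = a_{i,i+1}` (here `i` runs through `0, …, d-2`,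
corresponding to the paper's `b_1, …, b_{d-1}`). -/
def hanoiB (d : ℕ) (i : ℕ) (h : i + 1 < d) : Equiv.Perm (List (Fin d)) :=
  hanoiA ⟨i, Nat.lt_of_succ_lt h⟩ ⟨i + 1, h⟩

/-- The subgroup `G = ⟨b_1, …, b_{d-1}⟩` of the Hanoi Towers group. -/
def hanoiGroup (d : ℕ) : Subgroup (Equiv.Perm (List (Fin d))) :=
  Subgroup.closure {g | ∃ (i : ℕ) (h : i + 1 < d), g = hanoiB d i h}

/-! ### GGS groups (and the rooted automorphism `a`) -/

section GGS

variable {p : ℕ}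

/-- The function adding `m` to the first letter of a word over `ZMod p`. -/
def rotFun (m : ZMod p) : List (ZMod p) → List (ZMod p)
  | [] => []
  | x :: w => (x + m) :: w

/-- The rooted automorphism of the `p`-adic tree whose label at the root is the
`p`-cycle `x ↦ x + m`; for `m = 1` this is the generator `a` of a GGS-group
(identifying `x_i` with `i mod p`). -/
def rotPerm (m : ZMod p) : Equiv.Perm (List (ZMod p)) :=
  ⟨rotFun m, rotFun (-m),
    by intro w; cases w <;> simp [rotFun],
    by intro w; cases w <;> simp [rotFun]⟩

/-- The underlying function of the GGS generator `b` with defining vector `e`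
(the value `e 0` is irrelevant; `e i` for `i ≠ 0` are the coordinates
`e_1, …, e_{p-1}`): `b` fixes the first level, its section at `x_i` is
`a^{e_i}` for `i = 1, …, p-1` and its section at `x_p` (identified with `0`)
is `b` again. -/
def ggsFun (e : ZMod p → ZMod p) : List (ZMod p) → List (ZMod p)
  | [] => []
  | x :: w => if x = 0 then x :: ggsFun e w else x :: rotFun (e x) w

lemma ggsFun_inv (e : ZMod p → ZMod p) : ∀ w, ggsFun (fun i => -(e i)) (ggsFun e w) = w
  | [] => rfl
  | x :: w => by
    by_cases h : x = 0
    · simp only [ggsFun, if_pos h]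
      rw [ggsFun_inv e w]
    · simp only [ggsFun, if_neg h]
      cases w <;> simp [rotFun]

/-- The GGS generator `b` with defining vector `e`, as a tree automorphism. -/
def ggsB (e : ZMod p → ZMod p) : Equiv.Perm (List (ZMod p)) :=
  ⟨ggsFun e, ggsFun (fun i => -(e i)), ggsFun_inv e, by
    intro w
    have h := ggsFun_inv (fun i => -(e i)) w
    simpa using h⟩

end GGS

/-- The GGS-group `G = ⟨a, b⟩` over the `p`-adic tree with defining vector `e`. -/
def ggsGroup (p : ℕ) (e : ZMod p → ZMod p) : Subgroup (Equiv.Perm (List (ZMod p))) :=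
  Subgroup.closure {rotPerm 1, ggsB e}

/-! ### The first Grigorchuk group -/

/-- The three directed generators `b, c, d` (for `k % 3 = 0, 1, 2` respectively) of the
first Grigorchuk group, defined by the mutual recursion
`b = (a, c)`, `c = (a, d)`, `d = (1, b)` (identifying `x_1` with `0` and `x_2` with `1`). -/
def griFun : ℕ → List (ZMod 2) → List (ZMod 2)
  | _, [] => []
  | k, x :: w => if x = 0 then (if k % 3 = 2 then x :: w else x :: rotFun 1 w)
                 else x :: griFun (k + 1) w

lemma griFun_invol : ∀ (w : List (ZMod 2)) (k : ℕ), griFun k (griFun k w) = w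
  | [], _ => rfl
  | x :: w, k => by
    by_cases h : x = 0
    · by_cases h3 : k % 3 = 2
      · simp [griFun, h, h3]
      · simp only [griFun, if_pos h, if_neg h3]
        cases w with
        | nil => rfl
        | cons y v =>
            have hy : y + 1 + 1 = y := by
              rw [add_assoc]
              simp [show (1 : ZMod 2) + 1 = 0 from rfl]
            simp [rotFun, hy]
    · simp only [griFun, if_neg h]
      rw [griFun_invol w (k + 1)]

/-- The generator `b` of the first Grigorchuk group, with sections `(a, c)`. -/
def griB : Equiv.Perm (List (ZMod 2)) :=
  ⟨griFun 0, griFun 0, fun w => griFun_invol w 0, fun w => griFun_invol w 0⟩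

/-- The generator `c` of the first Grigorchuk group, with sections `(a, d)`. -/
def griC : Equiv.Perm (List (ZMod 2)) :=
  ⟨griFun 1, griFun 1, fun w => griFun_invol w 1, fun w => griFun_invol w 1⟩

/-- The generator `d` of the first Grigorchuk group, with sections `(1, b)`. -/
def griD : Equiv.Perm (List (ZMod 2)) :=
  ⟨griFun 2, griFun 2, fun w => griFun_invol w 2, fun w => griFun_invol w 2⟩

/-- The first Grigorchuk group `𝒢 = ⟨a, b, c, d⟩` acting on the binary tree. -/
def grigorchukGroup : Subgroup (Equiv.Perm (List (ZMod 2))) :=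
  Subgroup.closure {rotPerm 1, griB, griC, griD}

end TreeFract

namespace TreeFract

section Helpers

variable {X : Type*}

lemma autT_nil {g : Equiv.Perm (List X)} (hg : g ∈ AutT X) : g [] = [] := hg.1

lemma autT_prefix {g : Equiv.Perm (List X)} (hg : g ∈ AutT X) (u v : List X) :
    ∃ t : List X, t.length = v.length ∧ g (u ++ v) = g u ++ t := by
  induction v using List.reverseRecOn with
  | nil => exact ⟨[], rfl, by simp⟩
  | append_singleton v x ih =>
      obtain ⟨t, ht, hgt⟩ := ih
      obtain ⟨y, hy⟩ := hg.2 (u ++ v) x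
      refine ⟨t ++ [y], by simp [ht], ?_⟩
      rw [← List.append_assoc, hy, hgt, List.append_assoc]

lemma autT_length {g : Equiv.Perm (List X)} (hg : g ∈ AutT X) (u : List X) :
    (g u).length = u.length := by
  obtain ⟨t, ht, hgt⟩ := autT_prefix hg [] u
  simp only [List.nil_append, autT_nil hg] at hgt
  rw [hgt, ht]

lemma sectFun_spec {g : Equiv.Perm (List X)} (hg : g ∈ AutT X) (u v : List X) :
    g (u ++ v) = g u ++ sectFun g u v := by
  obtain ⟨t, ht, hgt⟩ := autT_prefix hg u v
  have h : sectFun g u v = t := by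
    unfold sectFun
    rw [hgt, List.drop_left]
  rw [h, hgt]

lemma sectFun_leftInv {g : Equiv.Perm (List X)} (hg : g ∈ AutT X) (u v : List X) :
    sectFun g⁻¹ (g u) (sectFun g u v) = v := by
  have hg' : g⁻¹ ∈ AutT X := inv_mem hg
  have h2 := sectFun_spec hg' (g u) (sectFun g u v)
  rw [← sectFun_spec hg u v] at h2
  simp only [Equiv.Perm.coe_inv, Equiv.symm_apply_apply] at h2
  exact (List.append_cancel_left h2).symm

lemma sectFun_bijective {g : Equiv.Perm (List X)} (hg : g ∈ AutT X) (u : List X) :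
    Function.Bijective (sectFun g u) := by
  constructor
  · intro v w h
    have hv := sectFun_leftInv hg u v
    rw [h, sectFun_leftInv hg u w] at hv
    exact hv.symm
  · intro v
    refine ⟨sectFun g⁻¹ (g u) v, ?_⟩
    have := sectFun_leftInv (inv_mem hg) (g u) v
    simpa using this

lemma sect_apply {g : Equiv.Perm (List X)} (hg : g ∈ AutT X) (u v : List X) :
    sect g u v = sectFun g u v := by
  unfold sect
  rw [dif_pos (sectFun_bijective hg u)]
  rfl

lemma sect_spec {g : Equiv.Perm (List X)} (hg : g ∈ AutT X) (u v : List X) :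
    g (u ++ v) = g u ++ sect g u v := by
  rw [sect_apply hg u v]
  exact sectFun_spec hg u v

lemma sect_one (u : List X) : sect (1 : Equiv.Perm (List X)) u = 1 := by
  apply Equiv.ext
  intro v
  rw [sect_apply (one_mem (AutT X)) u v]
  unfold sectFun
  simp

lemma sect_mul {f g : Equiv.Perm (List X)} (hf : f ∈ AutT X) (hg : g ∈ AutT X) (u : List X) :
    sect (f * g) u = sect f (g u) * sect g u := by
  apply Equiv.ext
  intro v
  have h1 : (f * g) (u ++ v) = (f * g) u ++ sect (f * g) u v := sect_spec (mul_mem hf hg) u v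
  have h2 : (f * g) (u ++ v) = (f * g) u ++ sect f (g u) (sect g u v) := by
    simp only [Equiv.Perm.mul_apply]
    rw [sect_spec hg u v, sect_spec hf (g u) (sect g u v)]
  rw [h2] at h1
  exact (List.append_cancel_left h1).symm

lemma sect_inv {g : Equiv.Perm (List X)} (hg : g ∈ AutT X) (u : List X) :
    sect g⁻¹ (g u) = (sect g u)⁻¹ := by
  have h := sect_mul (inv_mem hg) hg u
  rw [inv_mul_cancel, sect_one] at h
  exact eq_inv_of_mul_eq_one_left h.symm

lemma labelFun_spec {g : Equiv.Perm (List X)} (hg : g ∈ AutT X) (u : List X) (x : X) :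
    g (u ++ [x]) = g u ++ [labelFun g u x] := by
  obtain ⟨y, hy⟩ := hg.2 u x
  have h : labelFun g u x = y := by
    unfold labelFun
    rw [hy]
    simp
  rw [h, hy]

lemma labelFun_leftInv {g : Equiv.Perm (List X)} (hg : g ∈ AutT X) (u : List X) (x : X) :
    labelFun g⁻¹ (g u) (labelFun g u x) = x := by
  have h2 := labelFun_spec (inv_mem hg) (g u) (labelFun g u x)
  rw [← labelFun_spec hg u x] at h2
  simp only [Equiv.Perm.coe_inv, Equiv.symm_apply_apply] at h2
  have := List.append_cancel_left h2
  simpa using this.symm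

lemma labelFun_bijective {g : Equiv.Perm (List X)} (hg : g ∈ AutT X) (u : List X) :
    Function.Bijective (labelFun g u) := by
  constructor
  · intro x y h
    have hv := labelFun_leftInv hg u x
    rw [h, labelFun_leftInv hg u y] at hv
    exact hv.symm
  · intro x
    refine ⟨labelFun g⁻¹ (g u) x, ?_⟩
    have := labelFun_leftInv (inv_mem hg) (g u) x
    simpa using this

lemma label_spec {g : Equiv.Perm (List X)} (hg : g ∈ AutT X) (u : List X) (x : X) :
    g (u ++ [x]) = g u ++ [label g u x] := by
  have h : label g u x = labelFun g u x := by
    unfold label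
    rw [dif_pos (labelFun_bijective hg u)]
    rfl
  rw [h]
  exact labelFun_spec hg u x

end Helpers

/-- Let `G ≤ Aut T` be self-similar, containing a rooted
automorphism `a` whose root label is a `d`-cycle.  If for every `n` there is some
vertex `u_n ∈ L_n` with `ψ_{u_n}(st_G(L_n)) = G`, then `G` is super strongly fractal. -/
theorem superStronglyFractal_of_one_vertex (X : Type*) [Fintype X] [DecidableEq X]
    (G : Subgroup (Equiv.Perm (List X))) (hG : G ≤ AutT X) (hss : SelfSimilar G)
    (a : Equiv.Perm (List X)) (haG : a ∈ G)
    (hroot : ∀ x : X, sect a [x] = 1)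
    (hcyc : (label a ([] : List X)).IsCycle)
    (hcycsupp : (label a ([] : List X)).support = Finset.univ)
    (hgen : ∀ n : ℕ, ∃ u : List X, u.length = n ∧
      (fun g => sect g u) '' (stL G n : Set (Equiv.Perm (List X)))
        = (G : Set (Equiv.Perm (List X)))) :
    SuperStronglyFractal G := by
  have haT : a ∈ AutT X := hG haG
  set σ := label a ([] : List X) with hσ
  -- the rooted automorphism acts on the first letter only
  have ha1 : ∀ x : X, a [x] = [σ x] := by
    intro x
    have h := label_spec haT [] x
    simpa [autT_nil haT] using h
  have hacons : ∀ (x : X) (w : List X), a (x :: w) = σ x :: w := by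
    intro x w
    have h := sect_spec haT [x] w
    rw [hroot x] at h
    simpa [ha1 x] using h
  have hainv : ∀ (x : X) (w : List X), a⁻¹ (x :: w) = σ⁻¹ x :: w := by
    intro x w
    apply a.injective
    rw [Equiv.Perm.coe_inv, Equiv.apply_symm_apply, hacons]
    simp
  have hapow : ∀ (k : ℤ) (x : X) (w : List X), (a ^ k) (x :: w) = (σ ^ k) x :: w := by
    intro k
    induction k using Int.induction_on with
    | zero => simp
    | succ k ih =>
        intro x w
        rw [zpow_add_one, zpow_add_one, Equiv.Perm.mul_apply, Equiv.Perm.mul_apply,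
          hacons, ih]
    | pred k ih =>
        intro x w
        rw [zpow_sub_one, zpow_sub_one, Equiv.Perm.mul_apply, Equiv.Perm.mul_apply,
          hainv, ih]
  -- transitivity of ⟨σ⟩ on X
  have htransX : ∀ x y : X, ∃ k : ℤ, (σ ^ k) x = y := by
    intro x y
    have hx : σ x ≠ x := by
      rw [← Equiv.Perm.mem_support, hcycsupp]
      exact Finset.mem_univ x
    have hy : σ y ≠ y := by
      rw [← Equiv.Perm.mem_support, hcycsupp]
      exact Finset.mem_univ y
    exact hcyc.sameCycle hx hy
  -- transitivity on the first level
  have hT1 : ∀ u v : List X, u.length = 1 → v.length = 1 → ∃ g ∈ G, g u = v := by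
    intro u v hu hv
    obtain ⟨x, rfl⟩ := List.length_eq_one_iff.mp hu
    obtain ⟨y, rfl⟩ := List.length_eq_one_iff.mp hv
    obtain ⟨k, hk⟩ := htransX x y
    exact ⟨a ^ k, zpow_mem haG k, by rw [show [x] = x :: [] from rfl, hapow, hk]⟩
  -- transport of the single-vertex hypothesis along level transitivity
  have hTRANS : ∀ n : ℕ, (∀ u v : List X, u.length = n → v.length = n → ∃ g ∈ G, g u = v) →
      ∀ v : List X, v.length = n →
      (fun g => sect g v) '' (stL G n : Set (Equiv.Perm (List X)))
        = (G : Set (Equiv.Perm (List X))) := by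
    intro n hT v hv
    obtain ⟨u, hu, him⟩ := hgen n
    apply subset_antisymm
    · rintro _ ⟨h, hh, rfl⟩
      exact hss h hh.1 v
    · intro c hc
      obtain ⟨g, hgG, hguv⟩ := hT u v hu hv
      have hgT : g ∈ AutT X := hG hgG
      have hcu : sect g u ∈ G := hss g hgG u
      have hmem : (sect g u)⁻¹ * c * sect g u ∈ (G : Set (Equiv.Perm (List X))) :=
        mul_mem (mul_mem (inv_mem hcu) hc) hcu
      rw [← him] at hmem
      obtain ⟨h, hh, hsect⟩ := hmem
      have hhG : h ∈ G := hh.1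
      have hhT : h ∈ AutT X := hG hhG
      have hhfix : ∀ w : List X, w.length = n → h w = w := hh.2
      refine ⟨g * h * g⁻¹, ⟨mul_mem (mul_mem hgG hhG) (inv_mem hgG), fun w hw => ?_⟩, ?_⟩
      · have h1 : (g⁻¹ w).length = n := by
          rw [autT_length (inv_mem hgT) w, hw]
        show g (h (g⁻¹ w)) = w
        rw [hhfix _ h1, Equiv.Perm.coe_inv, Equiv.apply_symm_apply]
      · have hu' : h u = u := hhfix u hu
        have e1 : sect (g * h * g⁻¹) v = sect (g * h) (g⁻¹ v) * sect g⁻¹ v :=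
          sect_mul (mul_mem hgT hhT) (inv_mem hgT) v
        have hg1v : g⁻¹ v = u := by rw [← hguv, Equiv.Perm.coe_inv, Equiv.symm_apply_apply]
        have e2 : sect g⁻¹ v = (sect g u)⁻¹ := by rw [← hguv, sect_inv hgT u]
        rw [hg1v, e2, sect_mul hgT hhT u, hu'] at e1
        show sect (g * h * g⁻¹) v = c
        have hsect' : sect h u = (sect g u)⁻¹ * c * sect g u := hsect
        rw [e1, hsect']
        group
  -- the first-level case of the conclusion
  have hP1 := hTRANS 1 hT1
  -- level transitivity at every level
  have hT : ∀ n (u v : List X), u.length = n → v.length = n → ∃ g ∈ G, g u = v := by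
    intro n
    induction n with
    | zero =>
        intro u v hu hv
        rw [List.length_eq_zero_iff] at hu hv
        subst hu; subst hv
        exact ⟨1, one_mem G, rfl⟩
    | succ n ih =>
        intro u v hu hv
        match u, v with
        | x :: u', y :: v' =>
          simp only [List.length_cons, Nat.succ.injEq] at hu hv
          obtain ⟨c, hcG, hc⟩ := ih u' v' hu hv
          obtain ⟨k, hk⟩ := htransX x y
          have hcmem : c ∈ (fun g => sect g [y]) ''
              (stL G 1 : Set (Equiv.Perm (List X))) := by
            rw [hP1 [y] rfl]
            exact hcG
          obtain ⟨h, hh, hsh⟩ := hcmem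
          refine ⟨h * a ^ k, mul_mem hh.1 (zpow_mem haG k), ?_⟩
          show h ((a ^ k) (x :: u')) = y :: v'
          rw [hapow k x u', hk]
          have hsh' : sect h [y] = c := hsh
          have hspec := sect_spec (hG hh.1) [y] u'
          rw [hh.2 [y] rfl, hsh'] at hspec
          simpa [hc] using hspec
  intro n u hu
  exact hTRANS n (hT n) u hu

end TreeFract
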